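/- arXiv:1512.05850 — 2 statements merged into one kernel-verified Lean document; each statement's English description precedes it below -/
import Mathlib

section
/- Dirichlet's theorem in function fields: let F = F_q((T⁻¹)) and Λ = F_q[T]. For any nonnegative integer t and any y = (y_1, ..., y_n) ∈ F^n, there exist a nonzero q = (q_1, ..., q_n) ∈ Λ^n and p ∈ Λ such that |y_1 q_1 + ... + y_n q_n − p| < e^{−nt} and max_{1≤j≤n} |q_j| ≤ e^t. -/
open scoped Classical in
/-- The absolute value `|a| = e^(deg a)` on `F = F_q((T⁻¹))`.  We realize `F` as the
field of Laurent series `F_q((X))` via `X = T⁻¹`, so that `deg a = −(order a)`. -/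
noncomputable def lAbs {Fq : Type*} [Field Fq] (a : LaurentSeries Fq) : ℝ :=
  if a = 0 then 0 else Real.exp (-(a.order : ℝ))

/-- The element `T ∈ F = F_q((T⁻¹))` (i.e. `X⁻¹` in the Laurent series realization). -/
noncomputable def Tvar (Fq : Type*) [Field Fq] : LaurentSeries Fq :=
  HahnSeries.single (-1 : ℤ) 1

/-- The embedding of `Λ = F_q[T]` into `F = F_q((T⁻¹))`, sending a polynomial `p` to `p(T)`. -/
noncomputable def polyToF {Fq : Type*} [Field Fq] (p : Polynomial Fq) : LaurentSeries Fq :=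
  Polynomial.aeval (Tvar Fq) p

open Polynomial HahnSeries Finset in
lemma Tvar_pow {Fq : Type*} [Field Fq] (m : ℕ) :
    (Tvar Fq) ^ m = HahnSeries.single (-(m : ℤ)) 1 := by
  induction m with
  | zero =>
    simp only [pow_zero, Nat.cast_zero, neg_zero]
    rfl
  | succ m ih =>
    have hc : (-((m+1 : ℕ) : ℤ)) = -(m:ℤ) + -1 := by push_cast; ring
    rw [pow_succ, ih, Tvar, HahnSeries.single_mul_single, mul_one, hc]

open Polynomial HahnSeries in
lemma polyToF_coeff {Fq : Type*} [Field Fq] (p : Polynomial Fq) (k : ℤ) :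
    (polyToF p).coeff k = if k ≤ 0 then p.coeff (-k).toNat else 0 := by
  induction p using Polynomial.induction_on' with
  | add p q hp hq =>
    simp only [polyToF, map_add, HahnSeries.coeff_add, Polynomial.coeff_add] at *
    rw [hp, hq]
    split <;> simp
  | monomial m a =>
    rw [polyToF, Polynomial.aeval_monomial, Tvar_pow]
    have h0 : (algebraMap Fq (LaurentSeries Fq)) a = HahnSeries.C a := by
      rw [HahnSeries.algebraMap_apply', PowerSeries.algebraMap_apply, Algebra.algebraMap_self_apply,
        HahnSeries.ofPowerSeries_C]
    rw [h0, HahnSeries.C_apply, HahnSeries.single_mul_single, zero_add, mul_one,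
      HahnSeries.coeff_single]
    rw [Polynomial.coeff_monomial]
    by_cases hk : k ≤ 0
    · rw [if_pos hk]
      by_cases h : k = -(m:ℤ)
      · rw [if_pos h, if_pos]
        omega
      · rw [if_neg h, if_neg]
        omega
    · rw [if_neg hk, if_neg]
      omega

open Polynomial HahnSeries in
lemma exists_polyPart {Fq : Type*} [Field Fq] (z : LaurentSeries Fq) :
    ∃ p : Polynomial Fq, ∀ k : ℤ, k ≤ 0 → (z - polyToF p).coeff k = 0 := by
  classical
  set N : ℕ := (-z.order).toNat + 1 with hN
  refine ⟨∑ i ∈ Finset.range N, Polynomial.C (z.coeff (-(i:ℤ))) * Polynomial.X ^ i, ?_⟩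
  intro k hk
  rw [HahnSeries.coeff_sub, polyToF_coeff, if_pos hk]
  have hcoeff : (∑ i ∈ Finset.range N, Polynomial.C (z.coeff (-(i:ℤ))) * Polynomial.X ^ i).coeff
      (-k).toNat = if (-k).toNat ∈ Finset.range N then z.coeff (-((-k).toNat : ℤ)) else 0 := by
    rw [Polynomial.finset_sum_coeff]
    simp only [Polynomial.coeff_C_mul, Polynomial.coeff_X_pow, mul_ite, mul_one, mul_zero]
    rw [Finset.sum_ite_eq (Finset.range N) ((-k).toNat) (fun i => z.coeff (-(i:ℤ)))]
  rw [hcoeff]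
  have hkk : -(((-k).toNat : ℤ)) = k := by omega
  by_cases h : (-k).toNat ∈ Finset.range N
  · rw [if_pos h, hkk, sub_self]
  · rw [if_neg h, sub_zero]
    apply HahnSeries.coeff_eq_zero_of_lt_order
    simp only [Finset.mem_range, not_lt] at h
    omega

open Polynomial HahnSeries Finset in
lemma toPoly_coeff {Fq : Type*} [Field Fq] {t : ℕ} (c : Fin (t+1) → Fq) (m : ℕ) :
    (∑ i : Fin (t+1), Polynomial.C (c i) * Polynomial.X ^ (i:ℕ)).coeff m
      = if h : m < t+1 then c ⟨m, h⟩ else 0 := by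
  classical
  rw [Polynomial.finset_sum_coeff]
  simp only [Polynomial.coeff_C_mul, Polynomial.coeff_X_pow, mul_ite, mul_one, mul_zero]
  by_cases h : m < t + 1
  · rw [dif_pos h]
    rw [Finset.sum_eq_single (⟨m, h⟩ : Fin (t+1))]
    · simp
    · intro b _ hb
      rw [if_neg]
      intro he
      exact hb (by ext; simp [he])
    · simp
  · rw [dif_neg h]
    apply Finset.sum_eq_zero
    intro i _
    rw [if_neg]
    omega

/-- Dirichlet's theorem in function fields.  For every nonnegative integer `t`
and every `y ∈ F^n` there are `q ∈ Λ^n \ {0}` and `p ∈ Λ` with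
`|y·q − p| < e^(−n t)` and `max_j |q_j| ≤ e^t`. -/
theorem dirichlet_function_field {Fq : Type*} [Field Fq] [Fintype Fq]
    (n : ℕ) (hn : 0 < n) (t : ℕ) (y : Fin n → LaurentSeries Fq) :
    ∃ q : Fin n → Polynomial Fq, q ≠ 0 ∧ ∃ p : Polynomial Fq,
      lAbs (∑ j, y j * polyToF (q j) - polyToF p) < Real.exp (-(n * t : ℝ)) ∧
      ∀ j, lAbs (polyToF (q j)) ≤ Real.exp (t : ℝ) := by
  classical
  set toPoly : (Fin (t+1) → Fq) → Polynomial Fq :=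
    fun c => ∑ i : Fin (t+1), Polynomial.C (c i) * Polynomial.X ^ (i:ℕ) with htoPoly
  have toPoly_deg : ∀ c, (toPoly c).natDegree ≤ t := by
    intro c
    rw [Polynomial.natDegree_le_iff_coeff_eq_zero]
    intro N hN
    rw [htoPoly, toPoly_coeff, dif_neg (by omega)]
  have toPoly_eval : ∀ (c : Fin (t+1) → Fq) (i : Fin (t+1)), (toPoly c).coeff (i : ℕ) = c i := by
    intro c i
    rw [htoPoly, toPoly_coeff, dif_pos i.isLt]
  have toPoly_inj : Function.Injective toPoly := by
    intro c d h
    funext i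
    rw [← toPoly_eval c i, ← toPoly_eval d i, h]
  -- the pigeonhole map
  set f : (Fin n → Fin (t+1) → Fq) → (Fin (n*t) → Fq) :=
    fun c i => (∑ j, y j * polyToF (toPoly (c j))).coeff ((i : ℕ) + 1 : ℤ) with hf
  have hq2 : 1 < Fintype.card Fq := Fintype.one_lt_card
  have hcard : Fintype.card (Fin (n*t) → Fq) < Fintype.card (Fin n → Fin (t+1) → Fq) := by
    simp only [Fintype.card_fun, Fintype.card_fin]
    rw [← pow_mul]
    exact Nat.pow_lt_pow_right hq2 (by nlinarith)
  obtain ⟨a, b, hab, hfab⟩ := Fintype.exists_ne_map_eq_of_card_lt f hcard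
  set Q : Fin n → Polynomial Fq := fun j => toPoly (a j) - toPoly (b j) with hQ
  have hQne : Q ≠ 0 := by
    intro h
    apply hab
    funext j
    apply toPoly_inj
    have := congrFun h j
    simp only [hQ, Pi.zero_apply, sub_eq_zero] at this
    exact this
  refine ⟨Q, hQne, ?_⟩
  set z : LaurentSeries Fq := ∑ j, y j * polyToF (Q j) with hz
  have hzc : ∀ k : ℤ, 1 ≤ k → k ≤ (n*t : ℕ) → z.coeff k = 0 := by
    intro k hk1 hk2
    have hzz : z = (∑ j, y j * polyToF (toPoly (a j))) - (∑ j, y j * polyToF (toPoly (b j))) := by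
      rw [hz, ← Finset.sum_sub_distrib]
      congr 1
      funext j
      rw [hQ]
      simp only [polyToF, map_sub, mul_sub]
    have hik : (k - 1).toNat < n * t := by omega
    have := congrFun hfab ⟨(k-1).toNat, hik⟩
    simp only [hf] at this
    have hcast : (((k-1).toNat : ℕ) : ℤ) + 1 = k := by omega
    rw [hcast] at this
    rw [hzz, HahnSeries.coeff_sub, this, sub_self]
  obtain ⟨p, hp⟩ := exists_polyPart z
  set w : LaurentSeries Fq := z - polyToF p with hw
  have hwc : ∀ k : ℤ, k ≤ (n*t : ℕ) → w.coeff k = 0 := by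
    intro k hk
    by_cases h0 : k ≤ 0
    · exact hp k h0
    · rw [hw, HahnSeries.coeff_sub, polyToF_coeff, if_neg h0, sub_zero]
      exact hzc k (by omega) hk
  refine ⟨p, ?_, ?_⟩
  · -- |w| < exp(-(n*t))
    by_cases hw0 : w = 0
    · rw [lAbs, if_pos hw0]
      exact Real.exp_pos _
    · rw [lAbs, if_neg hw0]
      have horder : ((n*t : ℕ) : ℤ) < w.order := by
        by_contra hle
        push_neg at hle
        exact (mt HahnSeries.coeff_order_eq_zero.mp hw0) (hwc _ hle)
      rw [Real.exp_lt_exp]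
      have h1 : ((n*t : ℕ) : ℝ) < (((∑ j, y j * polyToF (Q j)) - polyToF p).order : ℝ) := by
        exact_mod_cast horder
      push_cast at h1 ⊢
      linarith
  · -- degree bound
    intro j
    by_cases h0 : polyToF (Q j) = 0
    · rw [lAbs, if_pos h0]
      positivity
    · rw [lAbs, if_neg h0]
      set o := (polyToF (Q j)).order with ho
      have hco := (mt HahnSeries.coeff_order_eq_zero.mp h0)
      rw [polyToF_coeff] at hco
      by_cases hle : o ≤ 0
      · rw [if_pos hle] at hco
        have hdeg : (Q j).natDegree ≤ t := by
          rw [hQ]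
          refine le_trans (Polynomial.natDegree_sub_le _ _) ?_
          simp [toPoly_deg]
        have h1 : (-o).toNat ≤ (Q j).natDegree := Polynomial.le_natDegree_of_ne_zero hco
        apply Real.exp_le_exp.mpr
        have h2 : -o ≤ (t : ℤ) := by omega
        have h3 : (-o : ℝ) ≤ (t : ℝ) := by exact_mod_cast h2
        linarith
      · rw [if_neg hle] at hco
        exact absurd rfl hco
end

section
/- Suppose f is (C, α)-good on U with respect to ν and g: U → ℝ is continuous with c_1 ≤ |f/g| ≤ c_2 on U for some c_1, c_2 > 0. Then g is (C (c_2/c_1)^α, α)-good on U with respect to ν. -/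
open MeasureTheory

/-- The support of a measure on a metric space: points all of whose balls have
positive measure. -/
def msupp {X : Type*} [MetricSpace X] [MeasurableSpace X] (ν : Measure X) : Set X :=
  {x | ∀ r > (0 : ℝ), 0 < ν (Metric.ball x r)}

/-- `‖f‖_{ν,B} = sup_(x ∈ B ∩ supp ν) |f x|`. -/
noncomputable def supNormOn {X 𝓕 : Type*} [MetricSpace X] [MeasurableSpace X] [Field 𝓕]
    (ν : Measure X) (abv : AbsoluteValue 𝓕 ℝ) (f : X → 𝓕) (B : Set X) : ℝ :=
  sSup ((fun x => abv (f x)) '' (B ∩ msupp ν))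

/-- `f : U → 𝓕` is `(C, α)`-good on `U` with respect to `ν`: for every ball `B ⊆ U`
centered in `supp ν` and every `ε > 0`,
`ν {x ∈ B : |f x| < ε} ≤ C (ε / ‖f‖_{ν,B})^α ν(B)`. -/
def IsCGood {X 𝓕 : Type*} [MetricSpace X] [MeasurableSpace X] [Field 𝓕]
    (ν : Measure X) (U : Set X) (C a : ℝ) (abv : AbsoluteValue 𝓕 ℝ) (f : X → 𝓕) : Prop :=
  ∀ (x : X) (r : ℝ), 0 < r → x ∈ msupp ν → Metric.ball x r ⊆ U →
    ∀ ε > (0 : ℝ), ν {y ∈ Metric.ball x r | abv (f y) < ε} ≤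
      ENNReal.ofReal (C * (ε / supNormOn ν abv f (Metric.ball x r)) ^ a) * ν (Metric.ball x r)

/-- if `f` is `(C, α)`-good on `U` with respect to `ν` and `g : U → ℝ`
is continuous with `c₁ ≤ |f/g| ≤ c₂` on `U` for some `c₁, c₂ > 0`, then `g` is
`(C (c₂/c₁)^α, α)`-good on `U` with respect to `ν`. -/
theorem isCGood_of_comparable {X 𝓕 : Type*} [MetricSpace X] [MeasurableSpace X] [BorelSpace X]
    [Field 𝓕] (ν : Measure X) [ν.Regular] (U : Set X) (hU : IsOpen U)
    (C a : ℝ) (hC : 0 < C) (ha : 0 < a) (abv : AbsoluteValue 𝓕 ℝ) (f : X → 𝓕)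
    (hf : IsCGood ν U C a abv f) (g : X → ℝ) (hg : ContinuousOn g U)
    (c₁ c₂ : ℝ) (hc₁ : 0 < c₁) (hc₂ : 0 < c₂)
    (hcomp : ∀ x ∈ U, c₁ ≤ abv (f x) / |g x| ∧ abv (f x) / |g x| ≤ c₂) :
    IsCGood ν U (C * (c₂ / c₁) ^ a) a (AbsoluteValue.abs : AbsoluteValue ℝ ℝ) g := by
  intro x r hr hx hBU ε hε
  set B := Metric.ball x r with hB
  have hxB : x ∈ B := Metric.mem_ball_self hr
  have hgpos : ∀ y ∈ U, 0 < |g y| := by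
    intro y hy
    rcases (abs_nonneg (g y)).lt_or_eq with h | h
    · exact h
    · exfalso
      have h1 := (hcomp y hy).1
      rw [← h, div_zero] at h1
      exact absurd h1 (not_le.mpr hc₁)
  have hfg : ∀ y ∈ U, c₁ * |g y| ≤ abv (f y) ∧ abv (f y) ≤ c₂ * |g y| := by
    intro y hy
    have hg' := hgpos y hy
    exact ⟨(le_div_iff₀ hg').mp (hcomp y hy).1, (div_le_iff₀ hg').mp (hcomp y hy).2⟩
  have hsub : {y ∈ B | AbsoluteValue.abs (g y) < ε} ⊆ {y ∈ B | abv (f y) < c₂ * ε} := by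
    intro y hy
    refine ⟨hy.1, ?_⟩
    have h2 := (hfg y (hBU hy.1)).2
    calc abv (f y) ≤ c₂ * |g y| := h2
      _ < c₂ * ε := by
          exact mul_lt_mul_of_pos_left hy.2 hc₂
  have hmono := measure_mono (μ := ν) hsub
  have hfbound := hf x r hr hx hBU (c₂ * ε) (mul_pos hc₂ hε)
  have hS : x ∈ B ∩ msupp ν := ⟨hxB, hx⟩
  have hSne : ((fun y => abv (f y)) '' (B ∩ msupp ν)).Nonempty := ⟨_, Set.mem_image_of_mem _ hS⟩
  have hSgne : ((fun y => |g y|) '' (B ∩ msupp ν)).Nonempty := ⟨_, Set.mem_image_of_mem _ hS⟩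
  by_cases hbdd : BddAbove ((fun y => abv (f y)) '' (B ∩ msupp ν))
  · -- bounded case
    have hgb : BddAbove ((fun y => |g y|) '' (B ∩ msupp ν)) := by
      obtain ⟨M, hM⟩ := hbdd
      refine ⟨M / c₁, ?_⟩
      rintro _ ⟨y, hy, rfl⟩
      have h1 := (hfg y (hBU hy.1)).1
      have h2 : abv (f y) ≤ M := hM (Set.mem_image_of_mem _ hy)
      rw [le_div_iff₀ hc₁]
      linarith [mul_comm c₁ |g y|]
    set Ng := supNormOn ν (AbsoluteValue.abs : AbsoluteValue ℝ ℝ) g B with hNg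
    set Nf := supNormOn ν abv f B with hNf
    have hNgpos : 0 < Ng := by
      have : |g x| ≤ Ng := le_csSup hgb (Set.mem_image_of_mem _ hS)
      exact lt_of_lt_of_le (hgpos x (hBU hxB)) this
    have hNfge : c₁ * Ng ≤ Nf := by
      rw [hNf, supNormOn, ← le_div_iff₀' hc₁]
      refine csSup_le hSgne ?_
      rintro _ ⟨y, hy, rfl⟩
      rw [le_div_iff₀' hc₁]
      exact le_trans (hfg y (hBU hy.1)).1 (le_csSup hbdd (Set.mem_image_of_mem _ hy))
    have hNfpos : 0 < Nf := lt_of_lt_of_le (mul_pos hc₁ hNgpos) hNfge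
    have hdiv : c₂ * ε / Nf ≤ c₂ / c₁ * (ε / Ng) := by
      rw [div_le_iff₀ hNfpos]
      have key : c₂ / c₁ * (ε / Ng) * (c₁ * Ng) = c₂ * ε := by
        field_simp
      calc c₂ * ε = c₂ / c₁ * (ε / Ng) * (c₁ * Ng) := key.symm
        _ ≤ c₂ / c₁ * (ε / Ng) * Nf := by
            apply mul_le_mul_of_nonneg_left hNfge
            positivity
    have hrpow : (c₂ * ε / Nf) ^ a ≤ (c₂ / c₁) ^ a * (ε / Ng) ^ a := by
      rw [← Real.mul_rpow (by positivity) (by positivity)]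
      exact Real.rpow_le_rpow (by positivity) hdiv ha.le
    refine le_trans hmono (le_trans hfbound ?_)
    apply mul_le_mul_left
    apply ENNReal.ofReal_le_ofReal
    calc C * (c₂ * ε / Nf) ^ a ≤ C * ((c₂ / c₁) ^ a * (ε / Ng) ^ a) :=
          mul_le_mul_of_nonneg_left hrpow hC.le
      _ = C * (c₂ / c₁) ^ a * (ε / Ng) ^ a := by ring
  · -- unbounded case: sSup junk value 0
    have hNf0 : supNormOn ν abv f B = 0 := Real.sSup_of_not_bddAbove hbdd
    have : ν {y ∈ B | abv (f y) < c₂ * ε} ≤ 0 := by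
      calc ν {y ∈ B | abv (f y) < c₂ * ε} ≤
          ENNReal.ofReal (C * (c₂ * ε / supNormOn ν abv f B) ^ a) * ν B := hfbound
        _ = 0 := by
            rw [hNf0, div_zero, Real.zero_rpow ha.ne', mul_zero, ENNReal.ofReal_zero, zero_mul]
    exact le_trans (le_trans hmono this) zero_le
end
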